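/- arXiv:1303.3554 — 2 statements merged into one kernel-verified Lean document; each statement's English description precedes it below -/
import Mathlib

section
/- Let a > 0, c ≤ -1, Q > 0, M > 0, and u ∈ C²([-a,a]) with 0 ≤ u ≤ M, u(a) = 0, and |u'' + cu'| ≤ Q on [-a,a]. Define K₀ = 2·max_{c ≤ -1} (1/|c|) ln(M c²/Q + 1). Then u'(x) ≥ -2Q/|c| for all x ∈ (-a, a - K₀]. -/
theorem deriv_lower_bound (a c Q M K₀ : ℝ) (ha : 0 < a) (hQ : 0 < Q) (hM : 0 < M)
    (hc : c ≤ -1)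
    (hK₀ : K₀ = 2 * ⨆ d : {d : ℝ // d ≤ -1}, (1 / |d.1|) * Real.log (M * d.1 ^ 2 / Q + 1))
    (u : ℝ → ℝ) (hu : ContDiff ℝ 2 u)
    (hrange : ∀ x ∈ Set.Icc (-a) a, 0 ≤ u x ∧ u x ≤ M)
    (hua : u a = 0)
    (hbound : ∀ z ∈ Set.Icc (-a) a, |deriv (deriv u) z + c * deriv u z| ≤ Q) :
    ∀ x ∈ Set.Ioc (-a) (a - K₀), -(2 * Q / |c|) ≤ deriv u x := by
  have hc0 : c < 0 := lt_of_le_of_lt hc (by norm_num)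
  have habs : |c| = -c := abs_of_neg hc0
  have habs1 : 1 ≤ |c| := by rw [habs]; linarith
  have habs0 : 0 < |c| := lt_of_lt_of_le one_pos habs1
  have hc2 : (0:ℝ) < c ^ 2 := by nlinarith
  -- supremum bound
  set f : {d : ℝ // d ≤ -1} → ℝ :=
    fun d => (1 / |d.1|) * Real.log (M * d.1 ^ 2 / Q + 1) with hf
  have hbdd : BddAbove (Set.range f) := by
    refine ⟨Real.log (M / Q + 1) + 2, ?_⟩
    rintro _ ⟨⟨d, hd⟩, rfl⟩
    have hd0 : d < 0 := lt_of_le_of_lt hd (by norm_num)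
    have habd : |d| = -d := abs_of_neg hd0
    have h1d : 1 ≤ |d| := by rw [habd]; linarith
    have h0d : 0 < |d| := lt_of_lt_of_le one_pos h1d
    have hd2 : 1 ≤ d ^ 2 := by nlinarith
    have hMQ : 0 < M / Q + 1 := by positivity
    have hlog1 : Real.log (M * d ^ 2 / Q + 1) ≤ Real.log ((M / Q + 1) * d ^ 2) := by
      apply Real.log_le_log (by positivity)
      have : M * d ^ 2 / Q = M / Q * d ^ 2 := by ring
      nlinarith [div_pos hM hQ]
    have hsq : d ^ 2 = |d| * |d| := by rw [← sq_abs]; ring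
    have hlog2 : Real.log ((M / Q + 1) * d ^ 2) = Real.log (M / Q + 1) + 2 * Real.log |d| := by
      rw [hsq, Real.log_mul (ne_of_gt hMQ) (by positivity), Real.log_mul (ne_of_gt h0d) (ne_of_gt h0d)]
      ring
    have hlogd : Real.log |d| ≤ |d| := (Real.log_le_sub_one_of_pos h0d).trans (by linarith)
    have hlogMQ : 0 ≤ Real.log (M / Q + 1) := Real.log_nonneg (by nlinarith [div_pos hM hQ])
    simp only [hf]
    calc 1 / |d| * Real.log (M * d ^ 2 / Q + 1)
        ≤ 1 / |d| * (Real.log (M / Q + 1) + 2 * Real.log |d|) := by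
          apply mul_le_mul_of_nonneg_left _ (by positivity)
          rw [← hlog2]; exact hlog1
      _ = Real.log (M / Q + 1) / |d| + 2 * (Real.log |d| / |d|) := by ring
      _ ≤ Real.log (M / Q + 1) + 2 := by
          have h1 : Real.log (M / Q + 1) / |d| ≤ Real.log (M / Q + 1) := by
            rw [div_le_iff₀ h0d]; nlinarith
          have h2 : Real.log |d| / |d| ≤ 1 := by
            rw [div_le_one h0d]; exact hlogd
          linarith
  set L : ℝ := Real.log (M * c ^ 2 / Q + 1) with hL
  have hT : 0 < M * c ^ 2 / Q := by positivity
  have hLpos : 0 < L := Real.log_pos (by linarith)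
  have hfc : f ⟨c, hc⟩ = 1 / |c| * L := rfl
  have hKge : 2 * (1 / |c| * L) ≤ K₀ := by
    rw [hK₀]
    have := le_ciSup hbdd ⟨c, hc⟩
    rw [hfc] at this
    linarith
  have hK0pos : 0 < K₀ := by
    have h1 : 0 < 1 / |c| := one_div_pos.mpr habs0
    nlinarith
  -- main argument
  intro y hy
  by_contra hlt
  push_neg at hlt
  obtain ⟨hy1, hy2⟩ := hy
  have hya : y < a := lt_of_le_of_lt hy2 (by linarith)
  have hyI : y ∈ Set.Icc (-a) a := ⟨hy1.le, hya.le⟩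
  -- differentiability
  have h2 : (2 : WithTop ℕ∞) = 1 + 1 := by norm_num
  have hud : Differentiable ℝ u ∧ ContDiff ℝ 1 (deriv u) := by
    have := contDiff_succ_iff_deriv.mp (h2 ▸ hu)
    exact ⟨this.1, this.2.2⟩
  have hdu : Differentiable ℝ (deriv u) := hud.2.differentiable one_ne_zero
  -- step 1 : g antitone
  set g : ℝ → ℝ := fun x => (deriv u x + Q / |c|) * Real.exp (c * (x - y)) with hg
  have hgder : ∀ x, HasDerivAt g
      ((deriv (deriv u) x + c * deriv u x - Q) * Real.exp (c * (x - y))) x := by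
    intro x
    have he : HasDerivAt (fun x => Real.exp (c * (x - y))) (c * Real.exp (c * (x - y))) x := by
      have h : HasDerivAt (fun x => c * (x - y)) c x := by
        simpa using ((hasDerivAt_id x).sub_const y).const_mul c
      simpa [mul_comm] using h.exp
    have hv : HasDerivAt (fun x => deriv u x + Q / |c|) (deriv (deriv u) x) x :=
      (hdu x).hasDerivAt.add_const _
    have hQc : Q / |c| * c = -Q := by
      rw [habs, div_mul_eq_mul_div, div_eq_iff (by linarith : (-c) ≠ 0)]; ring
    have heq : (deriv (deriv u) x + c * deriv u x - Q) * Real.exp (c * (x - y)) =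
        deriv (deriv u) x * Real.exp (c * (x - y)) +
          (deriv u x + Q / |c|) * (c * Real.exp (c * (x - y))) := by
      linear_combination (-Real.exp (c * (x - y))) * hQc
    rw [heq]
    exact hv.mul he
  have hganti : AntitoneOn g (Set.Icc y a) := by
    apply antitoneOn_of_deriv_nonpos (convex_Icc y a)
    · exact fun x _ => ((hgder x).differentiableAt).continuousAt.continuousWithinAt
    · exact fun x hx => ((hgder x).differentiableAt).differentiableWithinAt
    · intro x hx
      rw [interior_Icc] at hx
      rw [(hgder x).deriv]
      have hxI : x ∈ Set.Icc (-a) a := ⟨by linarith [hx.1], hx.2.le⟩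
      have hb := abs_le.mp (hbound x hxI)
      have hexp : 0 ≤ Real.exp (c * (x - y)) := (Real.exp_pos _).le
      exact mul_nonpos_of_nonpos_of_nonneg (by linarith [hb.2]) hexp
  -- step 2 : pointwise derivative bound
  have hstep2 : ∀ x ∈ Set.Icc y a, deriv u x ≤ -(Q / |c|) * Real.exp (|c| * (x - y)) := by
    intro x hx
    have hgx : g x ≤ g y := hganti (Set.left_mem_Icc.mpr hya.le) hx hx.1
    have hgy : g y ≤ -(Q / |c|) := by
      simp only [hg, sub_self, mul_zero, Real.exp_zero, mul_one]
      have h2Q : 2 * Q / |c| = Q / |c| + Q / |c| := by ring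
      rw [h2Q] at hlt
      linarith
    have he1 : (0:ℝ) < Real.exp (c * (x - y)) := Real.exp_pos _
    have he2 : (0:ℝ) < Real.exp (|c| * (x - y)) := Real.exp_pos _
    have hprod : Real.exp (c * (x - y)) * Real.exp (|c| * (x - y)) = 1 := by
      rw [← Real.exp_add, habs]
      ring_nf
      exact Real.exp_zero
    have h1 : (deriv u x + Q / |c|) * Real.exp (c * (x - y)) ≤ -(Q / |c|) := hgx.trans hgy
    have h2 : deriv u x + Q / |c| ≤ -(Q / |c|) * Real.exp (|c| * (x - y)) := by
      have := mul_le_mul_of_nonneg_right h1 he2.le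
      calc deriv u x + Q / |c|
          = (deriv u x + Q / |c|) * Real.exp (c * (x - y)) * Real.exp (|c| * (x - y)) := by
            rw [mul_assoc, hprod, mul_one]
        _ ≤ -(Q / |c|) * Real.exp (|c| * (x - y)) := this
    have hQc : 0 ≤ Q / |c| := by positivity
    linarith
  -- step 3 : φ antitone, integrate
  set φ : ℝ → ℝ := fun x => u x + Q / c ^ 2 * Real.exp (|c| * (x - y)) with hφ
  have hφder : ∀ x, HasDerivAt φ
      (deriv u x + Q / |c| * Real.exp (|c| * (x - y))) x := by
    intro x
    have he : HasDerivAt (fun x => Real.exp (|c| * (x - y))) (|c| * Real.exp (|c| * (x - y))) x := by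
      have h : HasDerivAt (fun x => |c| * (x - y)) |c| x := by
        simpa using ((hasDerivAt_id x).sub_const y).const_mul |c|
      simpa [mul_comm] using h.exp
    have hQc2 : Q / c ^ 2 * |c| = Q / |c| := by
      rw [← sq_abs c, div_mul_eq_mul_div, div_eq_div_iff (by positivity) habs0.ne']; ring
    have heq : deriv u x + Q / |c| * Real.exp (|c| * (x - y)) =
        deriv u x + Q / c ^ 2 * (|c| * Real.exp (|c| * (x - y))) := by
      linear_combination (-Real.exp (|c| * (x - y))) * hQc2
    rw [heq]
    exact (hud.1 x).hasDerivAt.add (he.const_mul (Q / c ^ 2))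
  have hφanti : AntitoneOn φ (Set.Icc y a) := by
    apply antitoneOn_of_deriv_nonpos (convex_Icc y a)
    · exact fun x _ => ((hφder x).differentiableAt).continuousAt.continuousWithinAt
    · exact fun x hx => ((hφder x).differentiableAt).differentiableWithinAt
    · intro x hx
      rw [interior_Icc] at hx
      rw [(hφder x).deriv]
      have := hstep2 x ⟨hx.1.le, hx.2.le⟩
      linarith
  have hφa : φ a ≤ φ y := hφanti (Set.left_mem_Icc.mpr hya.le) (Set.right_mem_Icc.mpr hya.le) hya.le
  simp only [hφ, hua, zero_add, sub_self, mul_zero, Real.exp_zero, mul_one] at hφa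
  -- step 4 : contradiction
  have hE : Real.exp (L * 2) ≤ Real.exp (|c| * (a - y)) := by
    apply Real.exp_le_exp.mpr
    have h1 : 2 * (1 / |c| * L) ≤ a - y := le_trans hKge (by linarith)
    calc L * 2 = |c| * (2 * (1 / |c| * L)) := by field_simp
      _ ≤ |c| * (a - y) := by
          apply mul_le_mul_of_nonneg_left h1 habs0.le
  have hEL : Real.exp (L * 2) = (M * c ^ 2 / Q + 1) ^ 2 := by
    have : L * 2 = L + L := by ring
    rw [this, Real.exp_add, Real.exp_log (by linarith)]
    ring
  rw [hEL] at hE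
  have huy : Q / c ^ 2 * Real.exp (|c| * (a - y)) ≤ u y + Q / c ^ 2 := hφa
  have hfinal : M < u y := by
    have hQc2pos : 0 < Q / c ^ 2 := div_pos hQ hc2
    have h1 : Q / c ^ 2 * ((M * c ^ 2 / Q + 1) ^ 2) ≤ Q / c ^ 2 * Real.exp (|c| * (a - y)) :=
      mul_le_mul_of_nonneg_left hE hQc2pos.le
    have hexpand : Q / c ^ 2 * ((M * c ^ 2 / Q + 1) ^ 2) =
        Q / c ^ 2 * (M * c ^ 2 / Q) ^ 2 + 2 * M + Q / c ^ 2 := by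
      have hcne : c ≠ 0 := hc0.ne
      field_simp
      ring
    have hsq : 0 ≤ Q / c ^ 2 * (M * c ^ 2 / Q) ^ 2 := by positivity
    linarith
  exact absurd (hrange y hyI).2 (not_le.mpr hfinal)
end

section
/- Let M > 1, c ∈ ℝ, a > 0, x_m ∈ (-a, a], and u ∈ C²([-a, x_m]) with 0 ≤ u, u(x_m) = M, u'(x_m) = 0, and -u'' - cu' ≤ 2M² on [-a, x_m]. If c < 0, then u(x) ≥ M(1 - M(x - x_m)²) for all x ∈ [-a, x_m]. -/
theorem lower_parabola_bound (M c a xm : ℝ) (hM : 1 < M) (ha : 0 < a)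
    (hxm : xm ∈ Set.Ioc (-a) a) (hc : c < 0)
    (u : ℝ → ℝ) (hu : ContDiff ℝ 2 u)
    (hupos : ∀ x ∈ Set.Icc (-a) xm, 0 ≤ u x)
    (huxm : u xm = M) (huderiv : deriv u xm = 0)
    (hineq : ∀ x ∈ Set.Icc (-a) xm, -(deriv (deriv u) x) - c * deriv u x ≤ 2 * M ^ 2) :
    ∀ x ∈ Set.Icc (-a) xm, M * (1 - M * (x - xm) ^ 2) ≤ u x := by
  have hc0 : c ≠ 0 := ne_of_lt hc
  have hM0 : (0:ℝ) < M := lt_trans one_pos hM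
  set k : ℝ := 2 * M ^ 2 / c with hkdef
  have hkc : c * k = 2 * M ^ 2 := by rw [hkdef]; field_simp
  have hk0 : k < 0 := div_neg_of_pos_of_neg (by positivity) hc
  have hud : Differentiable ℝ u := hu.differentiable (by norm_num)
  have hud2 : Differentiable ℝ (deriv u) := by
    have h2 : ContDiff ℝ ((1:ℕ) + 1) u := by exact_mod_cast hu
    exact ((contDiff_succ_iff_deriv.mp h2).2.2).differentiable (by simp)
  have hax : -a ≤ xm := le_of_lt hxm.1
  -- F
  set F : ℝ → ℝ := fun y => (deriv u y + k) * Real.exp (c * y) with hFdef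
  have hexp : ∀ x : ℝ, HasDerivAt (fun y => Real.exp (c * y)) (Real.exp (c * x) * c) x := by
    intro x
    exact (((hasDerivAt_id' x).const_mul c).exp).congr_deriv (by ring)
  have hF : ∀ x : ℝ, HasDerivAt F
      (deriv (deriv u) x * Real.exp (c * x) + (deriv u x + k) * (Real.exp (c * x) * c)) x := by
    intro x
    exact (((hud2 x).hasDerivAt).add_const k).mul (hexp x)
  have hmono : MonotoneOn F (Set.Icc (-a) xm) := by
    apply monotoneOn_of_deriv_nonneg (convex_Icc _ _)
    · exact (Continuous.continuousOn (by
        exact ((hud2.continuous.add continuous_const).mul (Real.continuous_exp.comp (continuous_const.mul continuous_id)))))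
    · intro x hx
      exact (hF x).differentiableAt.differentiableWithinAt
    · intro x hx
      rw [interior_Icc] at hx
      have hx' : x ∈ Set.Icc (-a) xm := Set.mem_Icc.mpr ⟨le_of_lt hx.1, le_of_lt hx.2⟩
      rw [(hF x).deriv]
      have h1 := hineq x hx'
      nlinarith [Real.exp_pos (c * x),
        mul_nonneg (Real.exp_pos (c * x)).le
          (show 0 ≤ deriv (deriv u) x + c * deriv u x + 2 * M ^ 2 by linarith)]
  -- step 1
  have step1 : ∀ x ∈ Set.Icc (-a) xm, deriv u x ≤ 2 * M ^ 2 * (xm - x) := by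
    intro x hx
    have hle := hmono hx (Set.mem_Icc.mpr ⟨hax, le_rfl⟩) hx.2
    simp only [hFdef, huderiv, zero_add] at hle
    have hE : Real.exp (c * xm) = Real.exp (c * x) * Real.exp (c * (xm - x)) := by
      rw [← Real.exp_add]; ring_nf
    have hge : 1 + c * (xm - x) ≤ Real.exp (c * (xm - x)) := by
      have := Real.add_one_le_exp (c * (xm - x)); linarith
    have hEx := Real.exp_pos (c * x)
    rw [hE] at hle
    have h1 : k * Real.exp (c * (xm - x)) ≤ k * (1 + c * (xm - x)) :=
      mul_le_mul_of_nonpos_left hge (le_of_lt hk0)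
    have h2 : (deriv u x + k) * Real.exp (c * x) ≤ (k * (1 + c * (xm - x))) * Real.exp (c * x) := by
      nlinarith
    have h3 : deriv u x + k ≤ k * (1 + c * (xm - x)) :=
      le_of_mul_le_mul_right h2 hEx
    have h4 : k * (1 + c * (xm - x)) = k + 2 * M ^ 2 * (xm - x) := by rw [← hkc]; ring
    linarith
  -- step 2
  set G : ℝ → ℝ := fun y => u y - M + M ^ 2 * (xm - y) ^ 2 with hGdef
  have hG : ∀ x : ℝ, HasDerivAt G (deriv u x - 2 * M ^ 2 * (xm - x)) x := by
    intro x
    have h1 : HasDerivAt (fun y => M ^ 2 * (xm - y) ^ 2) (M ^ 2 * (2 * (xm - x) ^ 1 * (-1))) x :=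
      (((hasDerivAt_id x).const_sub xm).pow 2).const_mul (M ^ 2)
    have h2 := (((hud x).hasDerivAt).sub_const M).add h1
    exact h2.congr_deriv (by ring)
  have hanti : AntitoneOn G (Set.Icc (-a) xm) := by
    apply antitoneOn_of_deriv_nonpos (convex_Icc _ _)
    · exact Continuous.continuousOn
        ((hud.continuous.sub continuous_const).add
          (continuous_const.mul ((continuous_const.sub continuous_id).pow 2)))
    · intro x hx
      exact (hG x).differentiableAt.differentiableWithinAt
    · intro x hx
      rw [interior_Icc] at hx
      have hx' : x ∈ Set.Icc (-a) xm := Set.mem_Icc.mpr ⟨le_of_lt hx.1, le_of_lt hx.2⟩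
      rw [(hG x).deriv]
      have := step1 x hx'
      linarith
  intro x hx
  have hle := hanti hx (Set.mem_Icc.mpr ⟨hax, le_rfl⟩) hx.2
  simp only [hGdef, huxm] at hle
  nlinarith [hle]
end
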